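/- For a multipartition Λ = (λ_χ)_{χ∈Γ^∨} of n, define K_Λ(q) := ∏_{i=1}^n(1-q^i) / ∏_{χ∈Γ^∨}∏_{u∈λ_χ}(1-q^{h_{λ_χ}(u)}). Then K_Λ(q) is a polynomial in q with K_Λ(1) = d_Λ = n!/∏_χ∏_{u∈λ_χ} h_{λ_χ}(u). -/

import Mathlib

open Finset

/-- number of elements of `B` below `b` in the same residue class mod `d` -/
def cntB (B : Finset ℕ) (d b : ℕ) : ℕ := (B.filter (fun s => s < b ∧ s % d = b % d)).card

def gB (B : Finset ℕ) (d b : ℕ) : ℕ := b % d + d * cntB B d b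

lemma card_residue (b d : ℕ) (hd : 0 < d) :
    ((Finset.range b).filter (fun s => s % d = b % d)).card = b / d := by
  rw [← Finset.card_range (b / d)]
  apply Finset.card_bij' (fun s _ => s / d) (fun k _ => b % d + d * k)
  · intro s hs
    simp only [Finset.mem_filter, Finset.mem_range] at hs
    obtain ⟨h1, h2⟩ := hs
    have hs' := Nat.div_add_mod s d
    have hb' := Nat.div_add_mod b d
    have : d * (s / d) < d * (b / d) := by omega
    exact Finset.mem_range.mpr (Nat.lt_of_mul_lt_mul_left this)
  · intro k hk
    simp only [Finset.mem_range] at hk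
    simp only [Finset.mem_filter, Finset.mem_range]
    constructor
    · have hb' := Nat.div_add_mod b d
      have : d * k < d * (b / d) := by
        exact (Nat.mul_lt_mul_left hd).mpr hk
      omega
    · have : (b % d + d * k) % d = b % d % d := Nat.add_mul_mod_self_left _ _ _
      rw [this]
      exact Nat.mod_mod_of_dvd _ dvd_rfl
  · intro s hs
    simp only [Finset.mem_filter, Finset.mem_range] at hs
    have hs' := Nat.div_add_mod s d
    omega
  · intro k hk
    have : (b % d + d * k) / d = k := by
      rw [Nat.add_mul_div_left _ _ hd, Nat.div_eq_of_lt (Nat.mod_lt b hd)]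
      omega
    exact this

lemma cntB_le (B : Finset ℕ) (d b : ℕ) (hd : 0 < d) : cntB B d b ≤ b / d := by
  rw [← Finset.card_range (b / d)]
  apply Finset.card_le_card_of_injOn (fun s => s / d)
  · intro s hs
    simp only [cntB, Finset.mem_coe, Finset.mem_filter] at hs
    obtain ⟨_, h1, h2⟩ := hs
    have hs' := Nat.div_add_mod s d
    have hb' := Nat.div_add_mod b d
    have : d * (s / d) < d * (b / d) := by omega
    exact Finset.mem_range.mpr (Nat.lt_of_mul_lt_mul_left this)
  · intro s hs s' hs' h
    simp only [cntB, Finset.coe_filter, Set.mem_setOf_eq] at hs hs'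
    have h' : s / d = s' / d := h
    have h1 := Nat.div_add_mod s d
    have h2 := Nat.div_add_mod s' d
    rw [h'] at h1
    omega

lemma gB_le (B : Finset ℕ) (d b : ℕ) (hd : 0 < d) : gB B d b ≤ b := by
  have h1 := cntB_le B d b hd
  have h2 := Nat.div_add_mod b d
  have : d * cntB B d b ≤ d * (b / d) := Nat.mul_le_mul_left d h1
  simp only [gB]
  omega

lemma gB_mul_eq (B : Finset ℕ) (d b : ℕ) (hd : 0 < d) :
    d * (b / d - cntB B d b) = b - gB B d b := by
  have h1 := cntB_le B d b hd
  have h2 := Nat.div_add_mod b d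
  have h3 : d * cntB B d b ≤ d * (b / d) := Nat.mul_le_mul_left d h1
  rw [Nat.mul_sub, gB]
  omega

lemma gB_inj (B : Finset ℕ) (d : ℕ) (hd : 0 < d) : Set.InjOn (gB B d) B := by
  intro b hb b' hb' h
  have hm : b % d = b' % d := by
    have h' : gB B d b % d = gB B d b' % d := by rw [h]
    have e1 : (b % d + d * cntB B d b) % d = b % d % d := Nat.add_mul_mod_self_left _ _ _
    have e2 : (b' % d + d * cntB B d b') % d = b' % d % d := Nat.add_mul_mod_self_left _ _ _
    have m1 : b % d % d = b % d := Nat.mod_mod_of_dvd _ dvd_rfl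
    have m2 : b' % d % d = b' % d := Nat.mod_mod_of_dvd _ dvd_rfl
    simp only [gB] at h'
    rw [e1, e2, m1, m2] at h'
    exact h'
  have hc : cntB B d b = cntB B d b' := by
    simp only [gB, hm] at h
    exact Nat.eq_of_mul_eq_mul_left hd (by omega)
  by_contra hne
  have key : ∀ x y : ℕ, x ∈ B → x < y → x % d = y % d →
      cntB B d x < cntB B d y := by
    intro x y hx hxy hmod
    apply Finset.card_lt_card
    constructor
    · intro s hs
      simp only [Finset.mem_filter] at hs ⊢
      exact ⟨hs.1, by omega, by omega⟩
    · intro hsub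
      have : x ∈ B.filter (fun s => s < y ∧ s % d = y % d) := by
        simp only [Finset.mem_filter]; exact ⟨hx, hxy, hmod⟩
      have := hsub this
      simp only [Finset.mem_filter] at this
      omega
  rcases Nat.lt_or_ge b b' with hlt | hge
  · exact absurd hc (Nat.ne_of_lt (key b b' hb hlt hm))
  · have : b' < b := by omega
    exact absurd hc.symm (Nat.ne_of_lt (key b' b hb' this hm.symm))
-- sum of distinct naturals is at least 0+1+...+(card-1)
lemma sum_distinct_ge (S : Finset ℕ) : ∑ k ∈ Finset.range S.card, k ≤ ∑ s ∈ S, s := by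
  induction S using Finset.strongInduction with
  | _ S ih =>
    rcases S.eq_empty_or_nonempty with rfl | hS
    · simp
    · have hmax := S.max'_mem hS
      have hcard : S.card ≤ S.max' hS + 1 := by
        have : S ⊆ Finset.range (S.max' hS + 1) := by
          intro x hx
          simp [Nat.lt_succ_iff, Finset.le_max' S x hx]
        simpa using Finset.card_le_card this
      have herase : (S.erase (S.max' hS)).card = S.card - 1 :=
        Finset.card_erase_of_mem hmax
      have h1 : ∑ k ∈ Finset.range (S.card - 1), k ≤ ∑ s ∈ S.erase (S.max' hS), s := by
        rw [← herase]; exact ih _ (Finset.erase_ssubset hmax)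

      have h2 : ∑ s ∈ S, s = S.max' hS + ∑ s ∈ S.erase (S.max' hS), s :=
        (Finset.add_sum_erase _ _ hmax).symm
      have hpos : 0 < S.card := Finset.card_pos.mpr hS
      have : ∑ k ∈ Finset.range S.card, k = (S.card - 1) + ∑ k ∈ Finset.range (S.card - 1), k := by
        obtain ⟨m, hm⟩ : ∃ m, S.card = m + 1 := ⟨S.card - 1, by omega⟩
        rw [hm, Finset.sum_range_succ_comm]
        simp
      omega

def hookLength (μ : YoungDiagram) (c : ℕ × ℕ) : ℕ :=
  (μ.rowLen c.1 - c.2) + (μ.colLen c.2 - c.1) - 1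

lemma key_hook_count (μ : YoungDiagram) (d : ℕ) (hd : 0 < d) :
    d * ((μ.cells.filter (fun c => d ∣ hookLength μ c)).card) ≤ μ.card := by
  set r := μ.colLen 0 with hr
  set β : ℕ → ℕ := fun i => μ.rowLen i + (r - 1 - i) with hβ
  set t : ℕ → ℕ := fun j => j + (r - μ.colLen j) with ht
  set B : Finset ℕ := (Finset.range r).image β with hB
  have hcol : ∀ j, μ.colLen j ≤ r := fun j => μ.colLen_anti 0 j (Nat.zero_le j)
  have hrowpos : ∀ i, i < r → 0 < μ.rowLen i := by
    intro i hi
    rw [← YoungDiagram.mem_iff_lt_rowLen]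
    exact YoungDiagram.mem_iff_lt_colLen.mpr hi
  have hmemfst : ∀ c : ℕ × ℕ, c ∈ μ.cells → c.1 < r := by
    intro c hc
    have h1 : c.1 < μ.colLen c.2 := YoungDiagram.mem_iff_lt_colLen.mp ((YoungDiagram.mem_cells _).mp hc)
    exact lt_of_lt_of_le h1 (hcol c.2)
  have hook_eq : ∀ i j, (i, j) ∈ μ → hookLength μ (i, j) = β i - t j ∧ t j < β i := by
    intro i j hij
    have h1 : j < μ.rowLen i := YoungDiagram.mem_iff_lt_rowLen.mp hij
    have h2 : i < μ.colLen j := YoungDiagram.mem_iff_lt_colLen.mp hij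
    have h3 := hcol j
    have h4 : i < r := lt_of_lt_of_le h2 h3
    constructor
    · simp only [hookLength, hβ, ht]; omega
    · simp only [hβ, ht]; omega
  have htB : ∀ j, t j ∉ B := by
    intro j hj
    simp only [hB, Finset.mem_image, Finset.mem_range] at hj
    obtain ⟨i, hi, hij⟩ := hj
    have h3 := hcol j
    have h4 := hrowpos i hi
    rcases Nat.lt_or_ge j (μ.rowLen i) with hlt | hge
    · have h2 : i < μ.colLen j :=
        YoungDiagram.mem_iff_lt_colLen.mp (YoungDiagram.mem_iff_lt_rowLen.mpr hlt)
      simp only [hβ, ht] at hij; omega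
    · have h2 : μ.colLen j ≤ i := by
        by_contra h
        have : (i, j) ∈ μ := YoungDiagram.mem_iff_lt_colLen.mpr (by omega)
        have := YoungDiagram.mem_iff_lt_rowLen.mp this
        omega
      simp only [hβ, ht] at hij; omega
  have htmono : ∀ j j', j < j' → t j < t j' := by
    intro j j' hjj
    have h1 := hcol j
    have h2 := hcol j'
    have h3 : μ.colLen j' ≤ μ.colLen j := μ.colLen_anti j j' (le_of_lt hjj)
    simp only [ht]; omega
  have hβanti : ∀ a b, a < b → b < r → β b < β a := by
    intro a b hab hbr
    have h1 : μ.rowLen b ≤ μ.rowLen a := μ.rowLen_anti a b (le_of_lt hab)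
    have h2 := hrowpos b hbr
    simp only [hβ]; omega
  have hβinj : Set.InjOn β (Finset.range r) := by
    intro i hi i' hi' h
    simp only [Finset.coe_range, Set.mem_Iio] at hi hi'
    by_contra hne
    rcases Nat.lt_or_ge i i' with hlt | hge
    · exact absurd h (Nat.ne_of_gt (hβanti i i' hlt hi'))
    · exact absurd h (Nat.ne_of_lt (hβanti i' i (by omega) hi))
  have hcardB : B.card = r := by
    rw [hB, Finset.card_image_of_injOn hβinj, Finset.card_range]
  have hcard : μ.card = ∑ i ∈ Finset.range r, μ.rowLen i := by
    have h0 : μ.cells.card = ∑ i ∈ Finset.range r, (μ.cells.filter (fun c => c.1 = i)).card :=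
      Finset.card_eq_sum_card_fiberwise (fun c hc => Finset.mem_range.mpr (hmemfst c hc))
    rw [YoungDiagram.card, h0]
    apply Finset.sum_congr rfl
    intro i _
    rw [μ.rowLen_eq_card]
    congr 1
  have hcount : (μ.cells.filter fun c => d ∣ hookLength μ c).card
      = ∑ i ∈ Finset.range r,
          ((μ.cells.filter fun c => d ∣ hookLength μ c).filter (fun c => c.1 = i)).card :=
    Finset.card_eq_sum_card_fiberwise
      (fun c hc => Finset.mem_range.mpr (hmemfst c (Finset.mem_filter.mp hc).1))
  have hrowbd : ∀ i ∈ Finset.range r,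
      ((μ.cells.filter fun c => d ∣ hookLength μ c).filter (fun c => c.1 = i)).card
        ≤ β i / d - cntB B d (β i) := by
    intro i hi
    have step : ((μ.cells.filter fun c => d ∣ hookLength μ c).filter (fun c => c.1 = i)).card
        ≤ ((Finset.range (β i)).filter (fun s => s ∉ B ∧ s % d = β i % d)).card := by
      apply Finset.card_le_card_of_injOn (fun c => t c.2)
      · intro c hc
        simp only [Finset.mem_coe, Finset.mem_filter] at hc
        obtain ⟨⟨hcμ, hdvd⟩, hc1⟩ := hc
        have hm : (c.1, c.2) ∈ μ := (YoungDiagram.mem_cells _).mp hcμ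
        obtain ⟨he, hlt⟩ := hook_eq c.1 c.2 hm
        have hdvd' : d ∣ β c.1 - t c.2 := by rw [← he]; exact hdvd
        rw [hc1] at hdvd' hlt
        simp only [Finset.mem_coe, Finset.mem_filter, Finset.mem_range]
        refine ⟨hlt, htB c.2, ?_⟩
        exact ((Nat.modEq_iff_dvd' (le_of_lt hlt)).mpr hdvd')
      · intro c hc c' hc' h
        simp only [Finset.coe_filter, Set.mem_setOf_eq] at hc hc'
        have h' : t c.2 = t c'.2 := h
        have h2 : c.2 = c'.2 := by
          by_contra hne
          rcases Nat.lt_or_ge c.2 c'.2 with hlt | hge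
          · exact absurd h' (Nat.ne_of_lt (htmono _ _ hlt))
          · exact absurd h' (Nat.ne_of_gt (htmono _ _ (by omega)))
        exact Prod.ext (hc.2.trans hc'.2.symm) h2
    have htarget : ((Finset.range (β i)).filter (fun s => s ∉ B ∧ s % d = β i % d)).card
        = β i / d - cntB B d (β i) := by
      have hA := card_residue (β i) d hd
      have e1 : (Finset.range (β i)).filter (fun s => s ∉ B ∧ s % d = β i % d)
          = ((Finset.range (β i)).filter (fun s => s % d = β i % d)).filter (fun s => ¬ s ∈ B) := by
        ext s
        simp only [Finset.mem_filter, Finset.mem_range]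
        tauto
      have e2 : ((Finset.range (β i)).filter (fun s => s % d = β i % d)).filter (fun s => s ∈ B)
          = B.filter (fun s => s < β i ∧ s % d = β i % d) := by
        ext s
        simp only [Finset.mem_filter, Finset.mem_range]
        tauto
      have e3 := Finset.card_filter_add_card_filter_not
        (s := (Finset.range (β i)).filter (fun s => s % d = β i % d)) (p := fun s => s ∈ B)
      rw [e2, hA] at e3
      rw [e1]
      simp only [cntB]
      omega
    omega
  -- assemble
  have hsum_bd : (μ.cells.filter fun c => d ∣ hookLength μ c).card
      ≤ ∑ i ∈ Finset.range r, (β i / d - cntB B d (β i)) := by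
    rw [hcount]
    exact Finset.sum_le_sum hrowbd
  have hmul : d * ∑ i ∈ Finset.range r, (β i / d - cntB B d (β i))
      = ∑ i ∈ Finset.range r, (β i - gB B d (β i)) := by
    rw [Finset.mul_sum]
    exact Finset.sum_congr rfl (fun i _ => gB_mul_eq B d (β i) hd)
  have hsum_split : ∑ i ∈ Finset.range r, (β i - gB B d (β i))
        + ∑ i ∈ Finset.range r, gB B d (β i) = ∑ i ∈ Finset.range r, β i := by
    rw [← Finset.sum_add_distrib]
    exact Finset.sum_congr rfl (fun i _ => Nat.sub_add_cancel (gB_le B d (β i) hd))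
  have hsum_b : ∑ i ∈ Finset.range r, β i = μ.card + ∑ k ∈ Finset.range r, k := by
    rw [hcard]
    have hrefl : ∑ i ∈ Finset.range r, (r - 1 - i) = ∑ i ∈ Finset.range r, i :=
      Finset.sum_range_reflect (fun k => k) r
    calc ∑ i ∈ Finset.range r, β i
        = ∑ i ∈ Finset.range r, μ.rowLen i + ∑ i ∈ Finset.range r, (r - 1 - i) :=
          Finset.sum_add_distrib
      _ = ∑ i ∈ Finset.range r, μ.rowLen i + ∑ k ∈ Finset.range r, k := by rw [hrefl]
  have hgsum : ∑ k ∈ Finset.range r, k ≤ ∑ i ∈ Finset.range r, gB B d (β i) := by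
    have himg : ∑ b ∈ B, gB B d b = ∑ i ∈ Finset.range r, gB B d (β i) := by
      rw [hB]
      exact Finset.sum_image (fun x hx y hy h => hβinj (by simpa using hx) (by simpa using hy) h)
    have h2 : ∑ s ∈ B.image (gB B d), s = ∑ b ∈ B, gB B d b :=
      Finset.sum_image (fun x hx y hy h =>
        gB_inj B d hd (by simpa using hx) (by simpa using hy) h)
    have h3 : (B.image (gB B d)).card = r := by
      rw [Finset.card_image_of_injOn (fun x hx y hy h =>
        gB_inj B d hd (by simpa using hx) (by simpa using hy) h), hcardB]
    have h4 := sum_distinct_ge (B.image (gB B d))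
    rw [h3, h2, himg] at h4
    exact h4
  have final : d * (μ.cells.filter fun c => d ∣ hookLength μ c).card
      ≤ ∑ i ∈ Finset.range r, (β i - gB B d (β i)) := by
    calc d * (μ.cells.filter fun c => d ∣ hookLength μ c).card
        ≤ d * ∑ i ∈ Finset.range r, (β i / d - cntB B d (β i)) :=
          Nat.mul_le_mul_left d hsum_bd
      _ = ∑ i ∈ Finset.range r, (β i - gB B d (β i)) := hmul
  omega

open Polynomial in
lemma monic_sigma {K : Type*} [Field K] (m : ℕ) (hm : 0 < m) :
    (∑ k ∈ Finset.range m, (X : K[X]) ^ k).Monic := by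
  obtain ⟨l, rfl⟩ : ∃ l, m = l + 1 := ⟨m - 1, by omega⟩
  rw [Finset.sum_range_succ, add_comm]
  apply Polynomial.monic_X_pow_add
  apply lt_of_le_of_lt (Polynomial.degree_sum_le _ _)
  refine (Finset.sup_lt_iff (WithBot.bot_lt_coe l)).mpr ?_
  intro k hk
  rw [Polynomial.degree_X_pow]
  exact Nat.cast_lt.mpr (Finset.mem_range.mp hk)

open Polynomial in
lemma eval_sigma {K : Type*} [Field K] (m : ℕ) (ζ : K) :
    Polynomial.eval ζ (∑ k ∈ Finset.range m, (X : K[X]) ^ k) = ∑ k ∈ Finset.range m, ζ ^ k := by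
  simp [Polynomial.eval_finset_sum]

open Polynomial in
lemma sigma_dvd_X_pow_sub_one {K : Type*} [Field K] (m : ℕ) :
    (∑ k ∈ Finset.range m, (X : K[X]) ^ k) ∣ (X ^ m - 1) :=
  ⟨X - 1, (geom_sum_mul X m).symm⟩

open Polynomial in
lemma rm_sigma_eq_zero {ζ : ℂ} {m : ℕ} (h : ζ ^ m ≠ 1) :
    rootMultiplicity ζ (∑ k ∈ Finset.range m, (X : ℂ[X]) ^ k) = 0 := by
  apply Polynomial.rootMultiplicity_eq_zero
  intro hroot
  rw [Polynomial.IsRoot, eval_sigma] at hroot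
  have := geom_sum_mul ζ m
  rw [hroot, zero_mul] at this
  exact h (sub_eq_zero.mp this.symm)

open Polynomial in
lemma rm_sigma_one {m : ℕ} (hm : 0 < m) :
    rootMultiplicity (1 : ℂ) (∑ k ∈ Finset.range m, (X : ℂ[X]) ^ k) = 0 := by
  apply Polynomial.rootMultiplicity_eq_zero
  intro hroot
  rw [Polynomial.IsRoot, eval_sigma] at hroot
  simp only [one_pow, Finset.sum_const, Finset.card_range, nsmul_eq_mul, mul_one] at hroot
  exact (Nat.cast_ne_zero.mpr hm.ne').elim (by exact_mod_cast hroot)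

open Polynomial in
lemma rm_sigma_le_one {m : ℕ} (hm : 0 < m) (ζ : ℂ) :
    rootMultiplicity ζ (∑ k ∈ Finset.range m, (X : ℂ[X]) ^ k) ≤ 1 := by
  by_contra h
  push_neg at h
  have hsf : Squarefree ((X : ℂ[X]) ^ m - 1) := by
    have := (Polynomial.separable_X_pow_sub_C (1 : ℂ)
      (Nat.cast_ne_zero.mpr hm.ne') one_ne_zero).squarefree
    simpa using this
  have h1 : (X - C ζ) ^ 2 ∣ (∑ k ∈ Finset.range m, (X : ℂ[X]) ^ k) :=
    dvd_trans (pow_dvd_pow _ h) (Polynomial.pow_rootMultiplicity_dvd _ ζ)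
  have h2 : (X - C ζ) * (X - C ζ) ∣ ((X : ℂ[X]) ^ m - 1) := by
    rw [← sq]
    exact h1.trans (sigma_dvd_X_pow_sub_one m)
  exact Polynomial.not_isUnit_X_sub_C ζ (hsf _ h2)

open Polynomial in
lemma rm_sigma_pos {ζ : ℂ} {m : ℕ} (hm : 0 < m) (hζ : ζ ≠ 1) (hζm : ζ ^ m = 1) :
    1 ≤ rootMultiplicity ζ (∑ k ∈ Finset.range m, (X : ℂ[X]) ^ k) := by
  rw [Nat.succ_le_iff, Polynomial.rootMultiplicity_pos (monic_sigma m hm).ne_zero]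
  rw [Polynomial.IsRoot, eval_sigma]
  have := geom_sum_mul ζ m
  rw [hζm, sub_self] at this
  rcases mul_eq_zero.mp this with h | h
  · exact h
  · exact absurd (sub_eq_zero.mp h) hζ

open Polynomial in
lemma rootMultiplicity_finset_prod {ι : Type*} (s : Finset ι) (f : ι → Polynomial ℂ)
    (hf : ∀ i ∈ s, f i ≠ 0) (a : ℂ) :
    (∏ i ∈ s, f i).rootMultiplicity a = ∑ i ∈ s, (f i).rootMultiplicity a := by
  classical
  have hprod : ∏ i ∈ s, f i ≠ 0 := Finset.prod_ne_zero_iff.mpr hf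
  rw [← Polynomial.count_roots, Polynomial.roots_prod f s hprod, Multiset.count_bind]
  simp only [← Polynomial.count_roots]
  rfl

lemma hook_pos (μ : YoungDiagram) (c : ℕ × ℕ) (hc : c ∈ μ.cells) : 0 < hookLength μ c := by
  have h1 : c.2 < μ.rowLen c.1 :=
    YoungDiagram.mem_iff_lt_rowLen.mp ((YoungDiagram.mem_cells _).mp hc)
  have h2 : c.1 < μ.colLen c.2 :=
    YoungDiagram.mem_iff_lt_colLen.mp ((YoungDiagram.mem_cells _).mp hc)
  simp only [hookLength]
  omega

open Polynomial in
lemma sigma_dvd_complex (Γ : Type) [Fintype Γ] (n : ℕ) (Λ : Γ → YoungDiagram)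
    (hΛ : ∑ χ, (Λ χ).card = n) :
    (∏ χ, ∏ c ∈ (Λ χ).cells, ∑ k ∈ Finset.range (hookLength (Λ χ) c), (X : ℂ[X]) ^ k)
      ∣ ∏ i ∈ Finset.range n, ∑ k ∈ Finset.range (i + 1), (X : ℂ[X]) ^ k := by
  classical
  set σ : ℕ → ℂ[X] := fun m => ∑ k ∈ Finset.range m, (X : ℂ[X]) ^ k with hσ
  set D : ℂ[X] := ∏ χ, ∏ c ∈ (Λ χ).cells, σ (hookLength (Λ χ) c) with hD
  set N : ℂ[X] := ∏ i ∈ Finset.range n, σ (i + 1) with hN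
  have hmonD : D.Monic := by
    apply monic_prod_of_monic
    intro χ _
    apply monic_prod_of_monic
    intro c hc
    exact monic_sigma _ (hook_pos (Λ χ) c hc)
  have hmonN : N.Monic := by
    apply monic_prod_of_monic
    intro i _
    exact monic_sigma _ (Nat.succ_pos i)
  -- count inequality
  have hcount : ∀ ζ : ℂ, D.rootMultiplicity ζ ≤ N.rootMultiplicity ζ := by
    intro ζ
    have hDne : ∀ χ ∈ (Finset.univ : Finset Γ),
        (∏ c ∈ (Λ χ).cells, σ (hookLength (Λ χ) c)) ≠ 0 := by
      intro χ _
      apply Finset.prod_ne_zero_iff.mpr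
      intro c hc
      exact (monic_sigma _ (hook_pos (Λ χ) c hc)).ne_zero
    have hDeq : D.rootMultiplicity ζ
        = ∑ χ, ∑ c ∈ (Λ χ).cells, (σ (hookLength (Λ χ) c)).rootMultiplicity ζ := by
      rw [hD, rootMultiplicity_finset_prod _ _ hDne]
      apply Finset.sum_congr rfl
      intro χ _
      exact rootMultiplicity_finset_prod _ _
        (fun c hc => (monic_sigma _ (hook_pos (Λ χ) c hc)).ne_zero) ζ
    have hNeq : N.rootMultiplicity ζ
        = ∑ i ∈ Finset.range n, (σ (i + 1)).rootMultiplicity ζ := by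
      rw [hN]
      exact rootMultiplicity_finset_prod _ _
        (fun i _ => (monic_sigma _ (Nat.succ_pos i)).ne_zero) ζ
    rw [hDeq, hNeq]
    by_cases hζ1 : ζ = 1
    · subst hζ1
      have : ∀ χ ∈ (Finset.univ : Finset Γ),
          ∑ c ∈ (Λ χ).cells, (σ (hookLength (Λ χ) c)).rootMultiplicity 1 = 0 := by
        intro χ _
        apply Finset.sum_eq_zero
        intro c hc
        exact rm_sigma_one (hook_pos (Λ χ) c hc)
      rw [Finset.sum_eq_zero this]
      exact Nat.zero_le _
    by_cases hord : ∃ k, 0 < k ∧ ζ ^ k = 1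
    · obtain ⟨k, hk0, hk1⟩ := hord
      have hfin : IsOfFinOrder ζ := isOfFinOrder_iff_pow_eq_one.mpr ⟨k, hk0, hk1⟩
      set d := orderOf ζ with hdd
      have hd : 0 < d := hfin.orderOf_pos
      have hiff : ∀ m : ℕ, ζ ^ m = 1 ↔ d ∣ m := fun m => (orderOf_dvd_iff_pow_eq_one).symm
      -- LHS bound
      have hL : ∀ χ, ∑ c ∈ (Λ χ).cells, (σ (hookLength (Λ χ) c)).rootMultiplicity ζ
          ≤ ((Λ χ).cells.filter (fun c => d ∣ hookLength (Λ χ) c)).card := by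
        intro χ
        rw [Finset.card_filter]
        apply Finset.sum_le_sum
        intro c hc
        by_cases hdvd : d ∣ hookLength (Λ χ) c
        · rw [if_pos hdvd]
          exact rm_sigma_le_one (hook_pos (Λ χ) c hc) ζ
        · rw [if_neg hdvd]
          rw [rm_sigma_eq_zero (fun h => hdvd ((hiff _).mp h))]
      have hL2 : ∑ χ, ((Λ χ).cells.filter (fun c => d ∣ hookLength (Λ χ) c)).card ≤ n / d := by
        rw [Nat.le_div_iff_mul_le hd]
        calc (∑ χ, ((Λ χ).cells.filter (fun c => d ∣ hookLength (Λ χ) c)).card) * d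
            = ∑ χ, d * ((Λ χ).cells.filter (fun c => d ∣ hookLength (Λ χ) c)).card := by
              rw [Finset.sum_mul]
              exact Finset.sum_congr rfl (fun χ _ => mul_comm _ _)
          _ ≤ ∑ χ, (Λ χ).card := Finset.sum_le_sum (fun χ _ => key_hook_count (Λ χ) d hd)
          _ = n := hΛ
      -- RHS bound
      have hR : n / d ≤ ∑ i ∈ Finset.range n, (σ (i + 1)).rootMultiplicity ζ := by
        rw [← Nat.card_multiples n d, Finset.card_filter]
        apply Finset.sum_le_sum
        intro i _
        by_cases hdvd : d ∣ i + 1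
        · rw [if_pos hdvd]
          exact rm_sigma_pos (Nat.succ_pos i) hζ1 ((hiff _).mpr hdvd)
        · rw [if_neg hdvd]
          exact Nat.zero_le _
      calc ∑ χ, ∑ c ∈ (Λ χ).cells, (σ (hookLength (Λ χ) c)).rootMultiplicity ζ
          ≤ ∑ χ, ((Λ χ).cells.filter (fun c => d ∣ hookLength (Λ χ) c)).card :=
            Finset.sum_le_sum (fun χ _ => hL χ)
        _ ≤ n / d := hL2
        _ ≤ _ := hR
    · push_neg at hord
      have : ∀ χ ∈ (Finset.univ : Finset Γ),
          ∑ c ∈ (Λ χ).cells, (σ (hookLength (Λ χ) c)).rootMultiplicity ζ = 0 := by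
        intro χ _
        apply Finset.sum_eq_zero
        intro c hc
        exact rm_sigma_eq_zero (hord _ (hook_pos (Λ χ) c hc))
      rw [Finset.sum_eq_zero this]
      exact Nat.zero_le _
  -- conclude divisibility from root multiplicities
  have hroots : D.roots ≤ N.roots := by
    rw [Multiset.le_iff_count]
    intro ζ
    rw [Polynomial.count_roots, Polynomial.count_roots]
    exact hcount ζ
  have hDfac : D = (D.roots.map fun a => X - C a).prod :=
    (IsAlgClosed.splits D).eq_prod_roots_of_monic hmonD
  calc D = (D.roots.map fun a => X - C a).prod := hDfac
    _ ∣ (N.roots.map fun a => X - C a).prod :=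
        Multiset.prod_dvd_prod_of_le (Multiset.map_le_map hroots)
    _ ∣ N := N.prod_multiset_X_sub_C_dvd

open Polynomial in
lemma sigma_dvd_rat (Γ : Type) [Fintype Γ] (n : ℕ) (Λ : Γ → YoungDiagram)
    (hΛ : ∑ χ, (Λ χ).card = n) :
    (∏ χ, ∏ c ∈ (Λ χ).cells, ∑ k ∈ Finset.range (hookLength (Λ χ) c), (X : ℚ[X]) ^ k)
      ∣ ∏ i ∈ Finset.range n, ∑ k ∈ Finset.range (i + 1), (X : ℚ[X]) ^ k := by
  rw [← Polynomial.map_dvd_map' (algebraMap ℚ ℂ)]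
  simp only [Polynomial.map_prod, Polynomial.map_sum, Polynomial.map_pow, Polynomial.map_X]
  exact sigma_dvd_complex Γ n Λ hΛ

/-- For a multipartition `Λ = (λ_χ)` of `n`, the rational function
`K_Λ(q) = ∏_{i=1}^n (1-q^i) / ∏_χ ∏_{u∈λ_χ} (1-q^{h(u)})` is a polynomial, whose value
at `q = 1` is `d_Λ = n!/∏_χ∏_{u∈λ_χ} h(u)` (stated multiplicatively). -/
theorem stmt14 (Γ : Type) [Fintype Γ] (n : ℕ) (Λ : Γ → YoungDiagram)
    (hΛ : ∑ χ, (Λ χ).card = n) :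
    ∃ P : Polynomial ℚ,
      (∏ i ∈ Finset.range n, (1 - Polynomial.X ^ (i + 1))) =
        P * ∏ χ, ∏ c ∈ (Λ χ).cells, (1 - Polynomial.X ^ hookLength (Λ χ) c) ∧
      P.eval 1 * ∏ χ, ∏ c ∈ (Λ χ).cells, (hookLength (Λ χ) c : ℚ) =
        (Nat.factorial n : ℚ) := by
  classical
  obtain ⟨P, hP⟩ := sigma_dvd_rat Γ n Λ hΛ
  have e1 : ∀ m : ℕ, (1 - Polynomial.X ^ m : Polynomial ℚ)
      = (1 - Polynomial.X) * ∑ k ∈ Finset.range m, Polynomial.X ^ k := by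
    intro m
    have h := geom_sum_mul (Polynomial.X : Polynomial ℚ) m
    linear_combination h
  have e2 : ∏ χ, ∏ c ∈ (Λ χ).cells, (1 - Polynomial.X ^ hookLength (Λ χ) c : Polynomial ℚ)
      = (1 - Polynomial.X) ^ n *
        ∏ χ, ∏ c ∈ (Λ χ).cells,
          ∑ k ∈ Finset.range (hookLength (Λ χ) c), Polynomial.X ^ k := by
    calc ∏ χ, ∏ c ∈ (Λ χ).cells, (1 - Polynomial.X ^ hookLength (Λ χ) c : Polynomial ℚ)
        = ∏ χ, ∏ c ∈ (Λ χ).cells, ((1 - Polynomial.X) *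
            ∑ k ∈ Finset.range (hookLength (Λ χ) c), Polynomial.X ^ k) :=
          Finset.prod_congr rfl fun χ _ => Finset.prod_congr rfl fun c _ => e1 _
      _ = ∏ χ, ((1 - Polynomial.X) ^ (Λ χ).card *
            ∏ c ∈ (Λ χ).cells,
              ∑ k ∈ Finset.range (hookLength (Λ χ) c), Polynomial.X ^ k) := by
          apply Finset.prod_congr rfl
          intro χ _
          rw [Finset.prod_mul_distrib, Finset.prod_const]
      _ = (∏ χ, (1 - Polynomial.X) ^ (Λ χ).card) *
            ∏ χ, ∏ c ∈ (Λ χ).cells,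
              ∑ k ∈ Finset.range (hookLength (Λ χ) c), Polynomial.X ^ k :=
          Finset.prod_mul_distrib
      _ = (1 - Polynomial.X) ^ n * _ := by
          rw [Finset.prod_pow_eq_pow_sum, hΛ]
  refine ⟨P, ?_, ?_⟩
  · calc ∏ i ∈ Finset.range n, (1 - Polynomial.X ^ (i + 1) : Polynomial ℚ)
        = ∏ i ∈ Finset.range n, ((1 - Polynomial.X) *
            ∑ k ∈ Finset.range (i + 1), Polynomial.X ^ k) :=
          Finset.prod_congr rfl fun i _ => e1 (i + 1)
      _ = (1 - Polynomial.X) ^ n *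
            ∏ i ∈ Finset.range n, ∑ k ∈ Finset.range (i + 1), Polynomial.X ^ k := by
          rw [Finset.prod_mul_distrib, Finset.prod_const, Finset.card_range]
      _ = (1 - Polynomial.X) ^ n *
            ((∏ χ, ∏ c ∈ (Λ χ).cells,
              ∑ k ∈ Finset.range (hookLength (Λ χ) c), Polynomial.X ^ k) * P) := by
          rw [hP]
      _ = P * ∏ χ, ∏ c ∈ (Λ χ).cells, (1 - Polynomial.X ^ hookLength (Λ χ) c) := by
          rw [e2]; ring
  · have heval := congrArg (Polynomial.eval (1 : ℚ)) hP
    simp only [Polynomial.eval_prod, Polynomial.eval_mul, Polynomial.eval_finset_sum,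
      Polynomial.eval_pow, Polynomial.eval_X, one_pow, Finset.sum_const, Finset.card_range,
      nsmul_eq_mul, mul_one] at heval
    have hfac : (∏ i ∈ Finset.range n, ((i + 1 : ℕ) : ℚ)) = (Nat.factorial n : ℚ) := by
      rw [← Nat.cast_prod, Finset.prod_range_add_one_eq_factorial]
    push_cast at heval hfac ⊢
    rw [← hfac, heval]
    ring
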